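/- Let W be the Virasoro-like Lie algebra with bracket [E(m), E(n)] = det(n; m)·E(m+n) for m, n ∈ ℤ² \ {0}. For any fixed c3, c4 ∈ ℂ, the bilinear map ψ defined by ψ(E(m), E(n)) = δ_{m+n, 0}·(m1·c3 + m2·c4) (where m = (m1, m2)) is a 2-cocycle on W, i.e., ψ is skew-symmetric and satisfies ψ([x, y], z) + ψ([y, z], x) + ψ([z, x], y) = 0 for all x, y, z ∈ W. -/

import Mathlib

/-- det((x1,x2);(y1,y2)) = x1·y2 − x2·y1. -/
def ddet (n m : ℤ × ℤ) : ℤ := n.1 * m.2 - n.2 * m.1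

noncomputable section

/-- The basis vectors `E(m)` of the Virasoro-like algebra `W`, realized in the free
ℂ-vector space on ℤ², with `E(0) := 0`. -/
def Efun (m : ℤ × ℤ) : (ℤ × ℤ) →₀ ℂ :=
  if m = 0 then 0 else Finsupp.single m 1

/-- The bracket `[E(m), E(n)] = det(n; m)·E(m+n)` of the Virasoro-like algebra,
extended bilinearly. -/
def vbr (x y : (ℤ × ℤ) →₀ ℂ) : (ℤ × ℤ) →₀ ℂ :=
  x.sum fun m a => y.sum fun n b => (a * b * (ddet n m : ℂ)) • Efun (m + n)

/-- The bilinear form `ψ(E(m), E(n)) = δ_{m+n,0}·(m1·c3 + m2·c4)` extended bilinearly. -/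
def psi (c3 c4 : ℂ) (x y : (ℤ × ℤ) →₀ ℂ) : ℂ :=
  x.sum fun m a => y.sum fun n b =>
    a * b * (if m + n = 0 then (m.1 : ℂ) * c3 + (m.2 : ℂ) * c4 else 0)

lemma psi_zero_left (c3 c4 : ℂ) (y : (ℤ × ℤ) →₀ ℂ) : psi c3 c4 0 y = 0 := by
  simp [psi]

lemma psi_zero_right (c3 c4 : ℂ) (x : (ℤ × ℤ) →₀ ℂ) : psi c3 c4 x 0 = 0 := by
  simp [psi]

lemma psi_add_left (c3 c4 : ℂ) (x x' y : (ℤ × ℤ) →₀ ℂ) :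
    psi c3 c4 (x + x') y = psi c3 c4 x y + psi c3 c4 x' y := by
  unfold psi
  rw [Finsupp.sum_add_index']
  · intro m; simp
  · intro m a a'
    rw [← Finsupp.sum_add]
    apply Finsupp.sum_congr
    intro n _
    ring

lemma psi_add_right (c3 c4 : ℂ) (x y y' : (ℤ × ℤ) →₀ ℂ) :
    psi c3 c4 x (y + y') = psi c3 c4 x y + psi c3 c4 x y' := by
  unfold psi
  rw [← Finsupp.sum_add]
  apply Finsupp.sum_congr
  intro m _
  rw [Finsupp.sum_add_index']
  · intro n; simp
  · intro n b b'; ring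

lemma psi_smul_left (c3 c4 : ℂ) (k : ℂ) (x y : (ℤ × ℤ) →₀ ℂ) :
    psi c3 c4 (k • x) y = k * psi c3 c4 x y := by
  unfold psi
  rw [Finsupp.sum_smul_index (fun m => by simp), Finsupp.mul_sum]
  apply Finsupp.sum_congr
  intro m _
  rw [Finsupp.mul_sum]
  apply Finsupp.sum_congr
  intro n _
  ring

lemma psi_single_single (c3 c4 : ℂ) (m n : ℤ × ℤ) (a b : ℂ) :
    psi c3 c4 (Finsupp.single m a) (Finsupp.single n b) =
      a * b * (if m + n = 0 then (m.1 : ℂ) * c3 + (m.2 : ℂ) * c4 else 0) := by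
  unfold psi
  rw [Finsupp.sum_single_index (by simp), Finsupp.sum_single_index (by simp)]

lemma vbr_zero_left (y : (ℤ × ℤ) →₀ ℂ) : vbr 0 y = 0 := by simp [vbr]

lemma vbr_zero_right (x : (ℤ × ℤ) →₀ ℂ) : vbr x 0 = 0 := by simp [vbr]

lemma vbr_add_left (x x' y : (ℤ × ℤ) →₀ ℂ) :
    vbr (x + x') y = vbr x y + vbr x' y := by
  unfold vbr
  rw [Finsupp.sum_add_index']
  · intro m; simp
  · intro m a a'
    rw [← Finsupp.sum_add]
    apply Finsupp.sum_congr
    intro n _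
    rw [← add_smul]
    ring_nf

lemma vbr_add_right (x y y' : (ℤ × ℤ) →₀ ℂ) :
    vbr x (y + y') = vbr x y + vbr x y' := by
  unfold vbr
  rw [← Finsupp.sum_add]
  apply Finsupp.sum_congr
  intro m _
  rw [Finsupp.sum_add_index']
  · intro n; simp
  · intro n b b'
    rw [← add_smul]
    ring_nf

lemma det_smul_Efun (m n : ℤ × ℤ) :
    ((ddet n m : ℤ) : ℂ) • Efun (m + n) = ((ddet n m : ℤ) : ℂ) • Finsupp.single (m + n) (1 : ℂ) := by
  unfold Efun
  split_ifs with h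
  · have h1 : m.1 + n.1 = 0 := congrArg Prod.fst h
    have h2 : m.2 + n.2 = 0 := congrArg Prod.snd h
    have a1 : m.1 = -n.1 := by omega
    have a2 : m.2 = -n.2 := by omega
    have : ddet n m = 0 := by simp [ddet, a1, a2]; ring
    simp [this]
  · rfl

lemma vbr_single_single (m n : ℤ × ℤ) (a b : ℂ) :
    vbr (Finsupp.single m a) (Finsupp.single n b) =
      (a * b * (ddet n m : ℂ)) • Finsupp.single (m + n) (1 : ℂ) := by
  unfold vbr
  rw [Finsupp.sum_single_index (by simp), Finsupp.sum_single_index (by simp)]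
  rw [mul_smul, det_smul_Efun, ← mul_smul]

theorem psi_is_two_cocycle (c3 c4 : ℂ) :
    (∀ x y : (ℤ × ℤ) →₀ ℂ, psi c3 c4 x y = -psi c3 c4 y x) ∧
    (∀ x y z : (ℤ × ℤ) →₀ ℂ,
      psi c3 c4 (vbr x y) z + psi c3 c4 (vbr y z) x + psi c3 c4 (vbr z x) y = 0) := by
  constructor
  · intro x y
    induction x using Finsupp.induction_linear with
    | zero => simp [psi_zero_left, psi_zero_right]
    | add f g hf hg =>
      rw [psi_add_left, psi_add_right, hf, hg]; ring
    | single m a =>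
      induction y using Finsupp.induction_linear with
      | zero => simp [psi_zero_left, psi_zero_right]
      | add f g hf hg =>
        rw [psi_add_left, psi_add_right, hf, hg]; ring
      | single n b =>
        rw [psi_single_single, psi_single_single]
        by_cases h : m + n = 0
        · have h' : n + m = 0 := by rw [add_comm]; exact h
          have h1 : (m.1 : ℂ) = -(n.1 : ℂ) := by
            have : m.1 + n.1 = 0 := congrArg Prod.fst h
            push_cast [show m.1 = -n.1 by omega]; ring
          have h2 : (m.2 : ℂ) = -(n.2 : ℂ) := by
            have : m.2 + n.2 = 0 := congrArg Prod.snd h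
            push_cast [show m.2 = -n.2 by omega]; ring
          rw [if_pos h, if_pos h', h1, h2]; ring
        · have h' : ¬ n + m = 0 := by rw [add_comm]; exact h
          rw [if_neg h, if_neg h']; ring
  · intro x y z
    induction x using Finsupp.induction_linear with
    | zero => simp [vbr_zero_left, vbr_zero_right, psi_zero_left, psi_zero_right]
    | add f g hf hg =>
      simp only [vbr_add_left, vbr_add_right, psi_add_left, psi_add_right]
      linear_combination hf + hg
    | single m a =>
      induction y using Finsupp.induction_linear with
      | zero => simp [vbr_zero_left, vbr_zero_right, psi_zero_left, psi_zero_right]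
      | add f g hf hg =>
        simp only [vbr_add_left, vbr_add_right, psi_add_left, psi_add_right]
        linear_combination hf + hg
      | single n b =>
        induction z using Finsupp.induction_linear with
        | zero => simp [vbr_zero_left, vbr_zero_right, psi_zero_left, psi_zero_right]
        | add f g hf hg =>
          simp only [vbr_add_left, vbr_add_right, psi_add_left, psi_add_right]
          linear_combination hf + hg
        | single p c =>
          rw [vbr_single_single, vbr_single_single, vbr_single_single,
            psi_smul_left, psi_smul_left, psi_smul_left,
            psi_single_single, psi_single_single, psi_single_single]
          by_cases h : m + n + p = 0
          · have h1 : m + n + p = 0 := h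
            have h2 : n + p + m = 0 := by rw [show n + p + m = m + n + p by ring]; exact h
            have h3 : p + m + n = 0 := by rw [show p + m + n = m + n + p by ring]; exact h
            rw [if_pos h1, if_pos h2, if_pos h3]
            have e1 : m.1 + n.1 + p.1 = 0 := congrArg Prod.fst h
            have e2 : m.2 + n.2 + p.2 = 0 := congrArg Prod.snd h
            have f1 : (p.1 : ℂ) = -(m.1 : ℂ) - (n.1 : ℂ) := by
              push_cast [show p.1 = -m.1 - n.1 by omega]; ring
            have f2 : (p.2 : ℂ) = -(m.2 : ℂ) - (n.2 : ℂ) := by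
              push_cast [show p.2 = -m.2 - n.2 by omega]; ring
            simp only [Prod.fst_add, Prod.snd_add, ddet]
            push_cast
            rw [f1, f2]
            ring
          · have h1 : ¬ m + n + p = 0 := h
            have h2 : ¬ n + p + m = 0 := by rw [show n + p + m = m + n + p by ring]; exact h
            have h3 : ¬ p + m + n = 0 := by rw [show p + m + n = m + n + p by ring]; exact h
            rw [if_neg h1, if_neg h2, if_neg h3]
            ring

end
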